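/- arXiv:1403.0078 — 3 statements merged into one kernel-verified Lean document; each statement's English description precedes it below -/
import Mathlib

section
/- Let E ⊆ ℝ^d be a measurable set. Then E and its complement Eᶜ are both equivalent to open subsets of ℝ^d if and only if the essential boundary ∂_e E has Lebesgue measure zero. -/
open MeasureTheory
open scoped ENNReal symmDiff

/-- The set of density points of a set `E ⊆ ℝ^d`:
points where `|B(x,t) ∩ E| / |B(x,t)| → 1` as `t → 0⁺`. -/
def densityPoints {d : ℕ} (E : Set (EuclideanSpace ℝ (Fin d))) :
    Set (EuclideanSpace ℝ (Fin d)) :=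
  {x | Filter.Tendsto (fun t : ℝ => volume (Metric.ball x t ∩ E) / volume (Metric.ball x t))
        (nhdsWithin 0 (Set.Ioi 0)) (nhds 1)}

/-- The essential boundary `∂ₑ E = closure(Eᵈ) ∩ closure((Eᶜ)ᵈ)`. -/
def essBoundary {d : ℕ} (E : Set (EuclideanSpace ℝ (Fin d))) :
    Set (EuclideanSpace ℝ (Fin d)) :=
  closure (densityPoints E) ∩ closure (densityPoints Eᶜ)

section Aux

open Metric Filter Set
open scoped Topology

variable {d : ℕ}

private lemma closedBall_ae_eq_ball (x : EuclideanSpace ℝ (Fin d)) {t : ℝ} (ht : 0 < t) :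
    (closedBall x t : Set (EuclideanSpace ℝ (Fin d))) =ᵐ[volume] ball x t := by
  rw [← measure_symmDiff_eq_zero_iff, symmDiff_of_ge ball_subset_closedBall,
    closedBall_diff_ball]
  exact Measure.addHaar_sphere_of_ne_zero volume x ht.ne'

private lemma mem_densityPoints_iff (E : Set (EuclideanSpace ℝ (Fin d)))
    (x : EuclideanSpace ℝ (Fin d)) :
    x ∈ densityPoints E ↔
      Tendsto (fun r : ℝ => volume (E ∩ closedBall x r) / volume (closedBall x r))
        (𝓝[>] 0) (𝓝 1) := by
  have h : (fun t : ℝ => volume (ball x t ∩ E) / volume (ball x t)) =ᶠ[𝓝[>] (0:ℝ)]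
      (fun t : ℝ => volume (E ∩ closedBall x t) / volume (closedBall x t)) := by
    filter_upwards [self_mem_nhdsWithin] with t ht
    have h1 := closedBall_ae_eq_ball x ht
    rw [measure_congr (ae_eq_set_inter (ae_eq_refl E) h1), measure_congr h1, Set.inter_comm]
  exact ⟨fun hx => hx.congr' h, fun hx => hx.congr' h.symm⟩

private lemma ae_mem_iff_densityPoints {E : Set (EuclideanSpace ℝ (Fin d))}
    (hE : MeasurableSet E) :
    ∀ᵐ x, (x ∈ E → x ∈ densityPoints E) ∧ (x ∉ E → x ∉ densityPoints E) := by
  filter_upwards [Besicovitch.ae_tendsto_measure_inter_div_of_measurableSet volume hE]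
    with x hx
  constructor
  · intro hxE
    rw [mem_densityPoints_iff]
    simpa [Set.indicator_of_mem hxE] using hx
  · intro hxE hdx
    rw [mem_densityPoints_iff] at hdx
    have h0 : Tendsto (fun r : ℝ => volume (E ∩ closedBall x r) / volume (closedBall x r))
        (𝓝[>] 0) (𝓝 0) := by simpa [Set.indicator_of_notMem hxE] using hx
    have h10 := tendsto_nhds_unique hdx h0
    norm_num at h10

private lemma densityPoints_disjoint (E : Set (EuclideanSpace ℝ (Fin d)))
    (hE : MeasurableSet E) : densityPoints E ∩ densityPoints Eᶜ = ∅ := by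
  ext x
  simp only [Set.mem_inter_iff, Set.mem_empty_iff_false, iff_false, not_and]
  intro h1 h2
  have hone : ∀ᶠ t in 𝓝[>] (0:ℝ),
      volume (ball x t ∩ E) / volume (ball x t)
        + volume (ball x t ∩ Eᶜ) / volume (ball x t) = 1 := by
    filter_upwards [self_mem_nhdsWithin] with t ht
    have hsum : volume (ball x t ∩ E) + volume (ball x t ∩ Eᶜ) = volume (ball x t) := by
      have := measure_inter_add_diff (μ := volume) (ball x t) hE
      rwa [Set.diff_eq] at this
    rw [ENNReal.div_add_div_same, hsum,
      ENNReal.div_self (measure_ball_pos volume x ht).ne' measure_ball_lt_top.ne]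
  have hsum2 : Tendsto (fun t : ℝ => volume (ball x t ∩ E) / volume (ball x t)
      + volume (ball x t ∩ Eᶜ) / volume (ball x t)) (𝓝[>] 0) (𝓝 2) := by
    have := Filter.Tendsto.add h1 h2
    norm_num at this
    exact this
  have := tendsto_nhds_unique (hsum2.congr' hone) tendsto_const_nhds
  norm_num at this

private lemma densityPoints_congr {E U : Set (EuclideanSpace ℝ (Fin d))}
    (h : E =ᵐ[volume] U) : densityPoints E = densityPoints U := by
  have key : ∀ (x : EuclideanSpace ℝ (Fin d)) (t : ℝ),
      volume (ball x t ∩ E) = volume (ball x t ∩ U) := fun x t =>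
    measure_congr (ae_eq_set_inter (ae_eq_refl _) h)
  unfold densityPoints
  ext x
  simp only [Set.mem_setOf_eq, key]

private lemma isOpen_subset_densityPoints {U : Set (EuclideanSpace ℝ (Fin d))}
    (hU : IsOpen U) : U ⊆ densityPoints U := by
  intro x hx
  obtain ⟨ε, hε, hball⟩ := Metric.isOpen_iff.1 hU x hx
  have h : (fun t : ℝ => volume (ball x t ∩ U) / volume (ball x t)) =ᶠ[𝓝[>] (0:ℝ)]
      (fun _ => 1) := by
    filter_upwards [Ioo_mem_nhdsGT_of_mem ⟨le_refl 0, hε⟩] with t ht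
    have hsub : ball x t ∩ U = ball x t :=
      Set.inter_eq_self_of_subset_left ((ball_subset_ball ht.2.le).trans hball)
    rw [hsub, ENNReal.div_self (measure_ball_pos volume x ht.1).ne' measure_ball_lt_top.ne]
  exact tendsto_const_nhds.congr' h.symm

private lemma ae_eq_densityPoints {E : Set (EuclideanSpace ℝ (Fin d))}
    (hE : MeasurableSet E) : E =ᵐ[volume] densityPoints E := by
  rw [Filter.eventuallyEq_set]
  filter_upwards [ae_mem_iff_densityPoints hE] with x hx
  exact ⟨hx.1, fun hd => by_contra fun hxE => hx.2 hxE hd⟩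

private lemma ae_union_densityPoints {E : Set (EuclideanSpace ℝ (Fin d))}
    (hE : MeasurableSet E) :
    volume ((densityPoints E ∪ densityPoints Eᶜ)ᶜ) = 0 := by
  have h : ∀ᵐ x, x ∈ densityPoints E ∪ densityPoints Eᶜ := by
    filter_upwards [ae_mem_iff_densityPoints hE, ae_mem_iff_densityPoints hE.compl]
      with x hx1 hx2
    by_cases hxE : x ∈ E
    · exact Or.inl (hx1.1 hxE)
    · exact Or.inr (hx2.1 hxE)
  rw [ae_iff] at h
  simpa [Set.compl_def] using h

private lemma exists_open_of_essBoundary {E : Set (EuclideanSpace ℝ (Fin d))}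
    (hE : MeasurableSet E) (h : volume (essBoundary E) = 0) :
    ∃ U : Set (EuclideanSpace ℝ (Fin d)), IsOpen U ∧ volume (E ∆ U) = 0 := by
  refine ⟨(closure (densityPoints Eᶜ))ᶜ, isClosed_closure.isOpen_compl, ?_⟩
  have h1 : volume (E ∆ densityPoints E) = 0 :=
    measure_symmDiff_eq_zero_iff.2 (ae_eq_densityPoints hE)
  have h2 : volume (densityPoints E ∆ (closure (densityPoints Eᶜ))ᶜ) = 0 := by
    rw [symmDiff_def]
    apply measure_union_null
    · refine measure_mono_null (fun y hy => ?_) h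
      exact ⟨subset_closure hy.1, not_not.1 hy.2⟩
    · refine measure_mono_null (fun y hy => ?_) (ae_union_densityPoints hE)
      rintro (hc | hc)
      · exact hy.2 hc
      · exact hy.1 (subset_closure hc)
  exact measure_mono_null (symmDiff_triangle E (densityPoints E) _)
    (measure_union_null h1 h2)

end Aux

/-- A measurable set and its complement are both equivalent to open sets iff the
essential boundary has Lebesgue measure zero. -/
theorem equiv_open_iff_essBoundary_null {d : ℕ}
    (E : Set (EuclideanSpace ℝ (Fin d))) (hE : MeasurableSet E) :
    ((∃ U : Set (EuclideanSpace ℝ (Fin d)), IsOpen U ∧ volume (E ∆ U) = 0) ∧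
     (∃ V : Set (EuclideanSpace ℝ (Fin d)), IsOpen V ∧ volume (Eᶜ ∆ V) = 0)) ↔
    volume (essBoundary E) = 0 := by
  constructor
  · rintro ⟨⟨U, hU, hEU⟩, ⟨V, hV, hEV⟩⟩
    have hEU' : E =ᵐ[volume] U := measure_symmDiff_eq_zero_iff.1 hEU
    have hEV' : Eᶜ =ᵐ[volume] V := measure_symmDiff_eq_zero_iff.1 hEV
    have hdU : densityPoints E = densityPoints U := densityPoints_congr hEU'
    have hdV : densityPoints Eᶜ = densityPoints V := densityPoints_congr hEV'
    have hdisj : densityPoints E ∩ densityPoints Eᶜ = ∅ := densityPoints_disjoint E hE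
    have hsubU : closure (densityPoints E) ⊆ Vᶜ := by
      apply closure_minimal _ hV.isClosed_compl
      intro y hy hyV
      have hmem : y ∈ densityPoints Eᶜ := hdV ▸ isOpen_subset_densityPoints hV hyV
      have : y ∈ densityPoints E ∩ densityPoints Eᶜ := ⟨hy, hmem⟩
      rw [hdisj] at this
      exact this
    have hsubV : closure (densityPoints Eᶜ) ⊆ Uᶜ := by
      apply closure_minimal _ hU.isClosed_compl
      intro y hy hyU
      have hmem : y ∈ densityPoints E := hdU ▸ isOpen_subset_densityPoints hU hyU
      have : y ∈ densityPoints E ∩ densityPoints Eᶜ := ⟨hmem, hy⟩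
      rw [hdisj] at this
      exact this
    have hsub : essBoundary E ⊆ (U ∪ V)ᶜ := by
      intro y hy
      rw [Set.compl_union]
      exact ⟨hsubV hy.2, hsubU hy.1⟩
    refine measure_mono_null hsub ?_
    have huv := ae_eq_set_union hEU' hEV'
    calc volume ((U ∪ V)ᶜ) = volume ((E ∪ Eᶜ)ᶜ) := (measure_congr huv.compl).symm
      _ = 0 := by simp
  · intro h
    have hc : volume (essBoundary Eᶜ) = 0 := by
      have : essBoundary Eᶜ = essBoundary E := by
        unfold essBoundary
        rw [compl_compl, Set.inter_comm]
      rw [this]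
      exact h
    exact ⟨exists_open_of_essBoundary hE h, exists_open_of_essBoundary hE.compl hc⟩
end

section
/- Let p, q ∈ [1,∞] and r ∈ [1,∞) satisfy 1/p + 1/q = 1/r. Suppose there is a constant C > 0 such that for every N ∈ ℕ and every sequence (ε_1, …, ε_N) ∈ {0,1}^N, the function on ℤ equal to ε_n at n ∈ {1,…,N} and 0 elsewhere is a bilinear multiplier symbol on 𝕋 for (p,q,r) with constant C. Then there exists a constant C′ > 0 such that for all trigonometric polynomials P, Q on 𝕋, ‖(Σ_{n≥1} |S_n(P,Q)|²)^{1/2}‖_{L^r(𝕋)} ≤ C′ ‖P‖_{L^p(𝕋)} ‖Q‖_{L^q(𝕋)}, where S_n(P,Q)(x) = Σ_{k,l∈ℤ, k−l=n} P̂(k) Q̂(l) e^{2πi(k+l)x}. -/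
open MeasureTheory Complex
open scoped ENNReal

/-- The trigonometric polynomial on the torus with finitely supported coefficient
function `a : ℤ →₀ ℂ`, viewed as a `1`-periodic function on `ℝ`. -/
noncomputable def trigPoly (a : ℤ →₀ ℂ) : ℝ → ℂ := fun x =>
  ∑ n ∈ a.support, a n * Complex.exp (2 * Real.pi * Complex.I * (n : ℂ) * (x : ℂ))

/-- The Haar measure of the torus `𝕋`, realized as Lebesgue measure on one period `[0,1)`. -/
noncomputable def torusMeasure : Measure ℝ := volume.restrict (Set.Ico (0 : ℝ) 1)

/-- `m(n-k)` is a bilinear multiplier symbol on the torus `𝕋` for `(p,q,r)` with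
constant `C`. -/
def IsBilinearMultiplierTorus (m : ℤ → ℂ) (p q r : ℝ≥0∞) (C : ℝ) : Prop :=
  ∀ a b : ℤ →₀ ℂ,
    eLpNorm (fun x : ℝ => ∑ n ∈ a.support, ∑ k ∈ b.support,
        a n * b k * m (n - k) *
          Complex.exp (2 * Real.pi * Complex.I * ((n : ℂ) + (k : ℂ)) * (x : ℂ)))
      r torusMeasure ≤
    ENNReal.ofReal C * eLpNorm (trigPoly a) p torusMeasure *
      eLpNorm (trigPoly b) q torusMeasure

/-- The `n`-th piece `Sₙ(P,Q)` of the bilinear Littlewood–Paley decomposition on the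
torus: the bilinear multiplier operator with symbol the indicator of `{n}`. -/
noncomputable def SnOp (a b : ℤ →₀ ℂ) (n : ℤ) : ℝ → ℂ := fun x =>
  ∑ k ∈ a.support, ∑ l ∈ b.support,
    if k - l = n then
      a k * b l * Complex.exp (2 * Real.pi * Complex.I * ((k : ℂ) + (l : ℂ)) * (x : ℂ))
    else 0



open Finset

namespace Khin
variable {N : ℕ}

/-- sign as a complex number -/
noncomputable def sg (ε : Fin N → Bool) (i : Fin N) : ℂ := if ε i then 1 else -1

lemma sg_sq (ε : Fin N → Bool) (i : Fin N) : sg ε i * sg ε i = 1 := by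
  unfold sg; split_ifs <;> ring

lemma norm_sg (ε : Fin N → Bool) (i : Fin N) : ‖sg ε i‖ = 1 := by
  unfold sg; split_ifs <;> simp

/-- flipping the m-th coordinate, as an equiv -/
lemma flip_invol (m : Fin N) :
    Function.Involutive (fun ε : Fin N → Bool => Function.update ε m (!ε m)) := by
  intro ε
  funext j
  by_cases hj : j = m
  · subst hj; simp
  · simp [Function.update_of_ne hj]

def flip (m : Fin N) : (Fin N → Bool) ≃ (Fin N → Bool) := (flip_invol m).toPerm _

lemma sg_flip_self (m : Fin N) (ε : Fin N → Bool) : sg (flip m ε) m = - sg ε m := by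
  unfold sg flip
  simp only [Function.Involutive.coe_toPerm, Function.update_self]
  cases h : ε m <;> simp [h]

lemma sg_flip_ne (m : Fin N) (ε : Fin N → Bool) {j : Fin N} (hj : j ≠ m) :
    sg (flip m ε) j = sg ε j := by
  unfold sg flip
  simp [Function.Involutive.coe_toPerm, Function.update_of_ne hj]

lemma sum_flip_zero (m : Fin N) (f : (Fin N → Bool) → ℂ)
    (hf : ∀ ε, f (flip m ε) = - f ε) : ∑ ε : Fin N → Bool, f ε = 0 := by
  have h1 : ∑ ε : Fin N → Bool, f (flip m ε) = ∑ ε : Fin N → Bool, f ε :=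
    Equiv.sum_comp (flip m) f
  simp only [hf, Finset.sum_neg_distrib] at h1
  linear_combination (-1/2 : ℂ) * h1

lemma card_eps : (Fintype.card (Fin N → Bool) : ℂ) = 2 ^ N := by
  simp [Fintype.card_fun]

lemma sum_sg_pair (i j : Fin N) :
    ∑ ε : Fin N → Bool, sg ε i * sg ε j = if i = j then (2 : ℂ) ^ N else 0 := by
  by_cases hij : i = j
  · subst hij
    simp only [sg_sq, if_pos rfl, Finset.sum_const, nsmul_eq_mul, mul_one]
    exact card_eps
  · rw [if_neg hij]
    refine sum_flip_zero i _ (fun ε => ?_)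
    rw [sg_flip_self, sg_flip_ne i ε (Ne.symm hij)]
    ring

lemma sum_sg_quad_zero {i j k l : Fin N} (h1 : i ≠ j) (h2 : i ≠ k) (h3 : i ≠ l) :
    ∑ ε : Fin N → Bool, sg ε i * sg ε j * (sg ε k * sg ε l) = 0 := by
  refine sum_flip_zero i _ (fun ε => ?_)
  rw [sg_flip_self, sg_flip_ne i ε (Ne.symm h1), sg_flip_ne i ε (Ne.symm h2),
    sg_flip_ne i ε (Ne.symm h3)]
  ring

lemma sum_sg_quad {p q : (Fin N) × (Fin N)} (hp : p.1 ≠ p.2) (hq : q.1 ≠ q.2) :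
    ∑ ε : Fin N → Bool, sg ε p.1 * sg ε p.2 * (sg ε q.1 * sg ε q.2)
      = if q = p ∨ q = p.swap then (2 : ℂ) ^ N else 0 := by
  obtain ⟨i, j⟩ := p
  obtain ⟨k, l⟩ := q
  simp only at hp hq ⊢
  by_cases h1 : k = i ∧ l = j
  · obtain ⟨rfl, rfl⟩ := h1
    rw [if_pos (Or.inl rfl)]
    have : ∀ ε : Fin N → Bool, sg ε k * sg ε l * (sg ε k * sg ε l) = 1 := by
      intro ε
      linear_combination (sg ε l * sg ε l) * sg_sq ε k + sg_sq ε l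
    simp only [this, Finset.sum_const, nsmul_eq_mul, mul_one]
    exact card_eps
  · by_cases h2 : k = j ∧ l = i
    · obtain ⟨rfl, rfl⟩ := h2
      simp only [Prod.swap_prod_mk, or_true, if_true]
      have : ∀ ε : Fin N → Bool, sg ε l * sg ε k * (sg ε k * sg ε l) = 1 := by
        intro ε
        linear_combination (sg ε l * sg ε l) * sg_sq ε k + sg_sq ε l
      simp only [this, Finset.sum_const, nsmul_eq_mul, mul_one]
      exact card_eps
    · have hcond : ¬ (((k, l) : Fin N × Fin N) = (i, j) ∨ ((k, l) : Fin N × Fin N) = (i, j).swap) := by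
        simp only [Prod.ext_iff, Prod.swap_prod_mk]
        tauto
      rw [if_neg hcond]
      -- some index among i,j appears exactly once
      by_cases hik : i = k
      · -- then j ≠ l (else h1), j ≠ i, j ≠ k
        subst hik
        have hjl : j ≠ l := fun e => h1 ⟨rfl, e.symm⟩
        have := sum_sg_quad_zero (i := j) (j := i) (k := i) (l := l)
          (Ne.symm hp) (Ne.symm hp) hjl
        calc ∑ ε : Fin N → Bool, sg ε i * sg ε j * (sg ε i * sg ε l)
            = ∑ ε : Fin N → Bool, sg ε j * sg ε i * (sg ε i * sg ε l) := by
              apply Finset.sum_congr rfl; intro ε _; ring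
          _ = 0 := this
      · by_cases hil : i = l
        · subst hil
          have hjk : j ≠ k := fun e => h2 ⟨e.symm, rfl⟩
          have := sum_sg_quad_zero (i := j) (j := i) (k := k) (l := i)
            (Ne.symm hp) hjk (Ne.symm hp)
          calc ∑ ε : Fin N → Bool, sg ε i * sg ε j * (sg ε k * sg ε i)
              = ∑ ε : Fin N → Bool, sg ε j * sg ε i * (sg ε k * sg ε i) := by
                apply Finset.sum_congr rfl; intro ε _; ring
            _ = 0 := this
        · exact sum_sg_quad_zero hp hik hil

end Khin

namespace Khin
open ComplexConjugate
variable {N : ℕ}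

lemma conj_sg (ε : Fin N → Bool) (i : Fin N) : conj (sg ε i) = sg ε i := by
  unfold sg; split_ifs <;> simp

noncomputable def T (c : Fin N → ℂ) (ε : Fin N → Bool) : ℂ := ∑ i, sg ε i * c i

lemma expand (c : Fin N → ℂ) (ε : Fin N → Bool) :
    T c ε * conj (T c ε) = ∑ i, ∑ j, (sg ε i * sg ε j) * (c i * conj (c j)) := by
  unfold T
  rw [map_sum, Finset.sum_mul_sum]
  refine Finset.sum_congr rfl (fun i _ => Finset.sum_congr rfl (fun j _ => ?_))
  rw [map_mul, conj_sg]
  ring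

lemma mul_conj_self (z : ℂ) : z * conj z = ((‖z‖^2 : ℝ) : ℂ) := by
  rw [Complex.mul_conj]
  norm_cast
  rw [Complex.normSq_eq_norm_sq]

lemma second_moment (c : Fin N → ℂ) :
    ∑ ε : Fin N → Bool, (T c ε * conj (T c ε)) = 2 ^ N * ∑ i, c i * conj (c i) := by
  simp only [expand]
  rw [Finset.sum_comm]
  rw [Finset.mul_sum]
  refine Finset.sum_congr rfl (fun i _ => ?_)
  rw [Finset.sum_comm]
  calc ∑ j, ∑ ε : Fin N → Bool, sg ε i * sg ε j * (c i * conj (c j))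
      = ∑ j, (∑ ε : Fin N → Bool, sg ε i * sg ε j) * (c i * conj (c j)) := by
        refine Finset.sum_congr rfl (fun j _ => ?_); rw [Finset.sum_mul]
    _ = ∑ j, if j = i then (2:ℂ)^N * (c i * conj (c j)) else 0 := by
        refine Finset.sum_congr rfl (fun j _ => ?_)
        rw [sum_sg_pair]
        by_cases hij : i = j
        · subst hij; simp
        · rw [if_neg hij, if_neg (Ne.symm hij), zero_mul]
    _ = 2^N * (c i * conj (c i)) := by rw [Finset.sum_ite_eq' Finset.univ i]; simp

noncomputable def Dd (c : Fin N → ℂ) (ε : Fin N → Bool) : ℂ :=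
  ∑ p ∈ Finset.univ.offDiag, sg ε p.1 * sg ε p.2 * (c p.1 * conj (c p.2))

lemma TT_eq (c : Fin N → ℂ) (ε : Fin N → Bool) :
    T c ε * conj (T c ε) = (∑ i, c i * conj (c i)) + Dd c ε := by
  rw [expand]
  have : ∑ i, ∑ j, (sg ε i * sg ε j) * (c i * conj (c j))
      = ∑ p ∈ Finset.univ ×ˢ Finset.univ, (sg ε p.1 * sg ε p.2) * (c p.1 * conj (c p.2)) :=
    (Finset.sum_product' _ _ (fun i j => (sg ε i * sg ε j) * (c i * conj (c j)))).symm
  rw [this, ← Finset.diag_union_offDiag,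
    Finset.sum_union (Finset.disjoint_diag_offDiag _), Finset.sum_diag]
  unfold Dd
  congr 1
  refine Finset.sum_congr rfl (fun i _ => ?_)
  rw [sg_sq, one_mul]

lemma sum_D_zero (c : Fin N → ℂ) : ∑ ε : Fin N → Bool, Dd c ε = 0 := by
  have h2 := second_moment c
  simp only [TT_eq c] at h2
  rw [Finset.sum_add_distrib, Finset.sum_const, nsmul_eq_mul, Finset.card_univ] at h2
  rw [show ((Fintype.card (Fin N → Bool) : ℂ)) = 2 ^ N from card_eps] at h2
  linear_combination h2

lemma sum_D_sq (c : Fin N → ℂ) :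
    ∑ ε : Fin N → Bool, (Dd c ε)^2
      = 2 ^ N * ∑ p ∈ Finset.univ.offDiag,
          ((c p.1 * conj (c p.2)) * (c p.1 * conj (c p.2))
            + (c p.1 * conj (c p.2)) * (c p.2 * conj (c p.1))) := by
  have hexp : ∀ ε : Fin N → Bool, (Dd c ε)^2
      = ∑ p ∈ Finset.univ.offDiag, ∑ q ∈ Finset.univ.offDiag,
          (sg ε p.1 * sg ε p.2 * (sg ε q.1 * sg ε q.2))
            * ((c p.1 * conj (c p.2)) * (c q.1 * conj (c q.2))) := by
    intro ε
    rw [sq, Dd, Finset.sum_mul_sum]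
    exact Finset.sum_congr rfl (fun p _ => Finset.sum_congr rfl (fun q _ => by ring))
  simp only [hexp]
  rw [Finset.sum_comm]
  rw [Finset.mul_sum]
  refine Finset.sum_congr rfl (fun p hp => ?_)
  have hp' : p.1 ≠ p.2 := (Finset.mem_offDiag.mp hp).2.2
  rw [Finset.sum_comm]
  have hswap : p.swap ∈ Finset.univ.offDiag := by
    rw [Finset.mem_offDiag]
    exact ⟨Finset.mem_univ _, Finset.mem_univ _, Ne.symm hp'⟩
  have hps : p.swap ≠ p := by
    intro hcontra
    apply hp'
    have := congrArg Prod.fst hcontra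
    simpa [Prod.fst_swap] using this.symm
  calc ∑ q ∈ Finset.univ.offDiag, ∑ ε : Fin N → Bool,
        (sg ε p.1 * sg ε p.2 * (sg ε q.1 * sg ε q.2))
          * ((c p.1 * conj (c p.2)) * (c q.1 * conj (c q.2)))
      = ∑ q ∈ Finset.univ.offDiag,
          (if q = p ∨ q = p.swap then (2:ℂ)^N else 0)
            * ((c p.1 * conj (c p.2)) * (c q.1 * conj (c q.2))) := by
        refine Finset.sum_congr rfl (fun q hq => ?_)
        rw [← Finset.sum_mul, sum_sg_quad hp' (Finset.mem_offDiag.mp hq).2.2]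
    _ = ∑ q ∈ Finset.univ.offDiag,
          ((if q = p then (2:ℂ)^N * ((c p.1 * conj (c p.2)) * (c q.1 * conj (c q.2))) else 0)
           + (if q = p.swap then (2:ℂ)^N * ((c p.1 * conj (c p.2)) * (c q.1 * conj (c q.2))) else 0)) := by
        refine Finset.sum_congr rfl (fun q _ => ?_)
        by_cases h1 : q = p
        · subst h1
          rw [if_pos (Or.inl rfl), if_pos rfl, if_neg (fun h => hps h.symm), add_zero]
        · by_cases h2 : q = p.swap
          · subst h2
            rw [if_pos (Or.inr rfl), if_neg h1, if_pos rfl, zero_add]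
          · rw [if_neg (by tauto), if_neg h1, if_neg h2, add_zero, zero_mul]
    _ = _ := by
        rw [Finset.sum_add_distrib, Finset.sum_ite_eq' _ p, Finset.sum_ite_eq' _ p.swap,
          if_pos hp, if_pos hswap]
        simp only [Prod.fst_swap, Prod.snd_swap]
        ring

end Khin

namespace Khin
open ComplexConjugate
variable {N : ℕ}

lemma second_moment_real (c : Fin N → ℂ) :
    ∑ ε : Fin N → Bool, ‖T c ε‖^2 = 2^N * ∑ i, ‖c i‖^2 := by
  have h := second_moment c
  simp only [mul_conj_self] at h
  rw [← Complex.ofReal_sum, ← Complex.ofReal_sum] at h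
  have h2 : ((∑ ε : Fin N → Bool, ‖T c ε‖^2 : ℝ) : ℂ)
      = ((2^N * ∑ i, ‖c i‖^2 : ℝ) : ℂ) := by
    push_cast
    push_cast at h
    linear_combination h
  exact_mod_cast h2

lemma fourth_moment (c : Fin N → ℂ) :
    ∑ ε : Fin N → Bool, ‖T c ε‖^4 ≤ 3 * 2^N * (∑ i, ‖c i‖^2)^2 := by
  set Ar := ∑ i, ‖c i‖^2 with hAr
  have hAr0 : 0 ≤ Ar := Finset.sum_nonneg (fun i _ => sq_nonneg _)
  have hAc : (∑ i, c i * conj (c i)) = (Ar : ℂ) := by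
    simp only [mul_conj_self]
    rw [← Complex.ofReal_sum]
  have key : ((∑ ε : Fin N → Bool, ‖T c ε‖^4 : ℝ) : ℂ)
      = 2^N * (Ar:ℂ)^2 + ∑ ε : Fin N → Bool, (Dd c ε)^2 := by
    have h1 : ∀ ε, ((‖T c ε‖^4 : ℝ) : ℂ) = (T c ε * conj (T c ε))^2 := fun ε => by
      rw [mul_conj_self]
      push_cast
      ring
    rw [Complex.ofReal_sum]
    simp only [h1, TT_eq, hAc]
    have h2 : ∀ ε, ((Ar:ℂ) + Dd c ε)^2
        = (Ar:ℂ)^2 + (2*(Ar:ℂ)) * Dd c ε + (Dd c ε)^2 := fun ε => by ring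
    simp only [h2]
    rw [Finset.sum_add_distrib, Finset.sum_add_distrib, Finset.sum_const,
      ← Finset.mul_sum, sum_D_zero, mul_zero, add_zero, nsmul_eq_mul, Finset.card_univ]
    rw [show ((Fintype.card (Fin N → Bool) : ℂ)) = 2^N from card_eps]
  have hDb : ‖∑ ε : Fin N → Bool, (Dd c ε)^2‖ ≤ 2^N * (2 * Ar^2) := by
    rw [sum_D_sq, norm_mul]
    have hn : ‖(2:ℂ)^N‖ = 2^N := by
      rw [norm_pow]
      norm_num
    rw [hn]
    refine mul_le_mul_of_nonneg_left ?_ (by positivity)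
    calc ‖∑ p ∈ Finset.univ.offDiag,
            ((c p.1 * conj (c p.2)) * (c p.1 * conj (c p.2))
              + (c p.1 * conj (c p.2)) * (c p.2 * conj (c p.1)))‖
        ≤ ∑ p ∈ Finset.univ.offDiag, (2 * (‖c p.1‖^2 * ‖c p.2‖^2)) := by
          refine (norm_sum_le _ _).trans (Finset.sum_le_sum (fun p _ => ?_))
          refine (norm_add_le _ _).trans ?_
          simp only [norm_mul, RCLike.norm_conj]
          ring_nf
          nlinarith [norm_nonneg (c p.1), norm_nonneg (c p.2), sq_nonneg (‖c p.1‖*‖c p.2‖)]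
      _ ≤ ∑ p ∈ Finset.univ ×ˢ Finset.univ, (2 * (‖c p.1‖^2 * ‖c p.2‖^2)) := by
          refine Finset.sum_le_sum_of_subset_of_nonneg ?_ (fun p _ _ => by positivity)
          rw [← Finset.diag_union_offDiag (Finset.univ : Finset (Fin N))]
          exact Finset.subset_union_right
      _ = 2 * Ar^2 := by
          rw [show ∑ p ∈ Finset.univ ×ˢ Finset.univ, (2 * (‖c p.1‖^2 * ‖c p.2‖^2))
              = ∑ i : Fin N, ∑ j : Fin N, 2 * (‖c i‖^2 * ‖c j‖^2) from
            Finset.sum_product' _ _ (fun i j => 2 * (‖c i‖^2 * ‖c j‖^2))]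
          rw [hAr, sq, Finset.sum_mul_sum, Finset.mul_sum]
          refine Finset.sum_congr rfl (fun i _ => ?_)
          rw [Finset.mul_sum]
  have h3 : ∑ ε : Fin N → Bool, ‖T c ε‖^4
      = ‖((∑ ε : Fin N → Bool, ‖T c ε‖^4 : ℝ) : ℂ)‖ := by
    rw [Complex.norm_real, Real.norm_eq_abs,
      _root_.abs_of_nonneg (Finset.sum_nonneg (fun ε _ => by positivity))]
  rw [h3, key]
  calc ‖(2:ℂ)^N * (Ar:ℂ)^2 + ∑ ε : Fin N → Bool, (Dd c ε)^2‖
      ≤ ‖(2:ℂ)^N * (Ar:ℂ)^2‖ + ‖∑ ε : Fin N → Bool, (Dd c ε)^2‖ := norm_add_le _ _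
    _ ≤ 2^N * Ar^2 + 2^N * (2*Ar^2) := by
        refine add_le_add ?_ hDb
        rw [norm_mul, norm_pow, norm_pow, Complex.norm_real]
        simp [Real.norm_eq_abs, _root_.abs_of_nonneg hAr0]
    _ = 3 * 2^N * Ar^2 := by ring

lemma khintchine (c : Fin N → ℂ) :
    Real.sqrt (∑ i, ‖c i‖^2)
      ≤ Real.sqrt 3 * (((2:ℝ)^N)⁻¹ * ∑ ε : Fin N → Bool, ‖T c ε‖) := by
  set Ar := ∑ i, ‖c i‖^2 with hAr
  have hAr0 : 0 ≤ Ar := Finset.sum_nonneg (fun i _ => sq_nonneg _)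
  set m : ℝ := (2:ℝ)^N with hm
  have hmpos : 0 < m := by positivity
  set S1 := ∑ ε : Fin N → Bool, ‖T c ε‖ with hS1def
  set S2 := ∑ ε : Fin N → Bool, ‖T c ε‖^2 with hS2def
  set S3 := ∑ ε : Fin N → Bool, ‖T c ε‖^3 with hS3def
  set S4 := ∑ ε : Fin N → Bool, ‖T c ε‖^4 with hS4def
  have hS1 : 0 ≤ S1 := Finset.sum_nonneg (fun ε _ => norm_nonneg _)
  have hS2 : 0 ≤ S2 := Finset.sum_nonneg (fun ε _ => by positivity)
  have hS3 : 0 ≤ S3 := Finset.sum_nonneg (fun ε _ => by positivity)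
  have e1 : S2^2 ≤ S1 * S3 := by
    have := Finset.sum_mul_sq_le_sq_mul_sq Finset.univ
      (fun ε : Fin N → Bool => Real.sqrt ‖T c ε‖)
      (fun ε : Fin N → Bool => ‖T c ε‖ * Real.sqrt ‖T c ε‖)
    calc S2^2 = (∑ ε : Fin N → Bool,
          Real.sqrt ‖T c ε‖ * (‖T c ε‖ * Real.sqrt ‖T c ε‖))^2 := by
          rw [hS2def]
          congr 1
          refine Finset.sum_congr rfl (fun ε _ => ?_)
          rw [show Real.sqrt ‖T c ε‖ * (‖T c ε‖ * Real.sqrt ‖T c ε‖)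
              = (Real.sqrt ‖T c ε‖ * Real.sqrt ‖T c ε‖) * ‖T c ε‖ from by ring,
            Real.mul_self_sqrt (norm_nonneg _)]
          ring
      _ ≤ (∑ ε : Fin N → Bool, Real.sqrt ‖T c ε‖^2)
            * ∑ ε : Fin N → Bool, (‖T c ε‖ * Real.sqrt ‖T c ε‖)^2 := this
      _ = S1 * S3 := by
          congr 1
          · exact Finset.sum_congr rfl (fun ε _ => Real.sq_sqrt (norm_nonneg _))
          · refine Finset.sum_congr rfl (fun ε _ => ?_)
            rw [mul_pow, Real.sq_sqrt (norm_nonneg _)]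
            ring
  have e2 : S3^2 ≤ S2 * S4 := by
    have := Finset.sum_mul_sq_le_sq_mul_sq Finset.univ
      (fun ε : Fin N → Bool => ‖T c ε‖)
      (fun ε : Fin N → Bool => ‖T c ε‖^2)
    calc S3^2 = (∑ ε : Fin N → Bool, ‖T c ε‖ * ‖T c ε‖^2)^2 := by
          rw [hS3def]
          congr 1
          exact Finset.sum_congr rfl (fun ε _ => by ring)
      _ ≤ (∑ ε : Fin N → Bool, ‖T c ε‖^2) * ∑ ε : Fin N → Bool, (‖T c ε‖^2)^2 := this
      _ = S2 * S4 := by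
          congr 1
          exact Finset.sum_congr rfl (fun ε _ => by ring)
  have hS2eq : S2 = m * Ar := second_moment_real c
  have hS4le : S4 ≤ 3 * m * Ar^2 := by
    have := fourth_moment c
    calc S4 ≤ 3 * 2^N * Ar^2 := this
      _ = 3 * m * Ar^2 := by rw [hm]
  rcases eq_or_lt_of_le hAr0 with hz | hpos
  · rw [← hz, Real.sqrt_zero]
    positivity
  · have h6 : (m*Ar)^4 ≤ 3 * m^2 * Ar^3 * S1^2 := by
      calc (m*Ar)^4 = (S2^2)^2 := by rw [hS2eq]; ring
        _ ≤ (S1*S3)^2 := pow_le_pow_left₀ (sq_nonneg _) e1 2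
        _ = S1^2 * S3^2 := by ring
        _ ≤ S1^2 * (S2 * S4) := mul_le_mul_of_nonneg_left e2 (sq_nonneg _)
        _ ≤ S1^2 * ((m*Ar) * (3*m*Ar^2)) := by
            refine mul_le_mul_of_nonneg_left ?_ (sq_nonneg _)
            refine mul_le_mul (le_of_eq hS2eq) hS4le ?_ (by positivity)
            exact Finset.sum_nonneg (fun ε _ => by positivity)
        _ = 3 * m^2 * Ar^3 * S1^2 := by ring
    have hp3 : 0 < m^2 * Ar^3 := by positivity
    have h7 : (m^2 * Ar) * (m^2 * Ar^3) ≤ (3 * S1^2) * (m^2 * Ar^3) := by nlinarith [h6]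
    have h8 : m^2 * Ar ≤ 3 * S1^2 := le_of_mul_le_mul_right h7 hp3
    have h9 : Ar ≤ 3 * (m⁻¹ * S1)^2 := by
      rw [mul_pow]
      rw [show (3:ℝ) * ((m⁻¹)^2 * S1^2) = (m⁻¹)^2 * (3 * S1^2) from by ring]
      calc Ar = (m⁻¹)^2 * (m^2 * Ar) := by field_simp
        _ ≤ (m⁻¹)^2 * (3 * S1^2) := mul_le_mul_of_nonneg_left h8 (by positivity)
    calc Real.sqrt Ar ≤ Real.sqrt (3 * (m⁻¹ * S1)^2) := Real.sqrt_le_sqrt h9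
      _ = Real.sqrt 3 * (m⁻¹ * S1) := by
          rw [Real.sqrt_mul (by norm_num), Real.sqrt_sq (by positivity)]

end Khin

set_option maxHeartbeats 2000000 in
/-- If every 0-1 sequence supported on $\{1,…,N\}$ is a bilinear multiplier symbol on
$𝕋$ with a uniform constant, then (by Khintchine's inequality) the bilinear
Littlewood–Paley square function is bounded. -/
theorem torus_squareFunction_bound (p q r : ℝ≥0∞)
    (hp : 1 ≤ p) (hq : 1 ≤ q) (hr : 1 ≤ r) (hrtop : r ≠ ⊤)
    (hpqr : 1 / p + 1 / q = 1 / r)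
    (h : ∃ C : ℝ, 0 < C ∧ ∀ N : ℕ, ∀ eps : ℕ → ℂ, (∀ n, eps n = 0 ∨ eps n = 1) →
      IsBilinearMultiplierTorus
        (fun z : ℤ => if 1 ≤ z ∧ z ≤ (N : ℤ) then eps z.toNat else 0) p q r C) :
    ∃ C' : ℝ, 0 < C' ∧ ∀ a b : ℤ →₀ ℂ,
      eLpNorm (fun x : ℝ => Real.sqrt (∑' n : ℕ, ‖SnOp a b ((n : ℤ) + 1) x‖ ^ 2))
          r torusMeasure ≤
        ENNReal.ofReal C' * eLpNorm (trigPoly a) p torusMeasure *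
          eLpNorm (trigPoly b) q torusMeasure := by
  classical
  obtain ⟨C, hC, hmul⟩ := h
  refine ⟨3 * Real.sqrt 3 * C, by positivity, ?_⟩
  intro a b
  set Pa := eLpNorm (trigPoly a) p torusMeasure with hPa
  set Qb := eLpNorm (trigPoly b) q torusMeasure with hQb
  set N : ℕ := (a.support ×ˢ b.support).sup (fun pr => (pr.1 - pr.2).toNat) with hN
  have hSn0 : ∀ z : ℤ, ((N:ℤ) < z) → SnOp a b z = 0 := by
    intro z hz
    funext x
    unfold SnOp
    refine Finset.sum_eq_zero (fun k hk => Finset.sum_eq_zero (fun l hl => ?_))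
    rw [if_neg]
    intro hkl
    have hle : (k - l).toNat ≤ N := by
      rw [hN]
      exact Finset.le_sup (f := fun pr : ℤ × ℤ => (pr.1 - pr.2).toNat) (b := (k, l))
        (Finset.mem_product.mpr ⟨hk, hl⟩)
    omega
  have contSn : ∀ n : ℤ, Continuous (SnOp a b n) := by
    intro n
    unfold SnOp
    refine continuous_finset_sum _ (fun k _ => continuous_finset_sum _ (fun l _ => ?_))
    split_ifs
    · fun_prop
    · exact continuous_const
  have htsum : ∀ x : ℝ, (∑' n : ℕ, ‖SnOp a b ((n:ℤ)+1) x‖^2)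
      = ∑ i : Fin N, ‖SnOp a b ((i.val:ℤ)+1) x‖^2 := by
    intro x
    rw [tsum_eq_sum (s := Finset.range N)
      (by
        intro n hn
        have hlt : (N:ℤ) < (n:ℤ)+1 := by
          simp only [Finset.mem_range, not_lt] at hn
          omega
        rw [hSn0 _ hlt]
        simp)]
    exact (Fin.sum_univ_eq_sum_range (fun m => ‖SnOp a b ((m:ℤ)+1) x‖^2) N).symm
  clear_value N
  set F : (Fin N → Bool) → ℝ → ℂ :=
    fun ε x => ∑ i : Fin N, Khin.sg ε i * SnOp a b ((i.val:ℤ)+1) x with hF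
  have contF : ∀ ε, Continuous (F ε) := fun ε =>
    continuous_finset_sum _ (fun i _ => continuous_const.mul (contSn _))
  set U : (ℕ → ℂ) → ℝ → ℂ :=
    fun eps x => ∑ i : Fin N, eps (i.val+1) * SnOp a b ((i.val:ℤ)+1) x with hU
  have contU : ∀ eps, Continuous (U eps) := fun eps =>
    continuous_finset_sum _ (fun i _ => continuous_const.mul (contSn _))
  have hrepr : ∀ eps : ℕ → ℂ, ∀ x : ℝ,
      (∑ n ∈ a.support, ∑ k ∈ b.support,
        a n * b k * (if 1 ≤ n - k ∧ n - k ≤ (N:ℤ) then eps (n-k).toNat else 0) *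
          Complex.exp (2 * Real.pi * Complex.I * ((n : ℂ) + (k : ℂ)) * (x:ℂ)))
      = U eps x := by
    intro eps x
    have key : ∀ (z : ℤ) (w : ℂ),
        (∑ i : Fin N, eps (i.val+1) * (if z = (i.val:ℤ)+1 then w else 0))
          = (if 1 ≤ z ∧ z ≤ (N:ℤ) then eps z.toNat else 0) * w := by
      intro z w
      by_cases hz : 1 ≤ z ∧ z ≤ (N:ℤ)
      · rw [if_pos hz]
        have hlt : (z - 1).toNat < N := by omega
        rw [Finset.sum_eq_single (⟨(z-1).toNat, hlt⟩ : Fin N)]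
        · have hc : z = ((⟨(z-1).toNat, hlt⟩ : Fin N).val : ℤ) + 1 := by
            simp only []
            omega
          rw [if_pos hc]
          have hv : (⟨(z-1).toNat, hlt⟩ : Fin N).val + 1 = z.toNat := by
            simp only []
            omega
          rw [hv]
        · intro i _ hi
          rw [if_neg, mul_zero]
          intro hcon
          apply hi
          apply Fin.ext
          simp only []
          omega
        · intro hmem
          exact absurd (Finset.mem_univ _) hmem
      · rw [if_neg hz, zero_mul]
        refine Finset.sum_eq_zero (fun i _ => ?_)
        rw [if_neg, mul_zero]
        intro hcon
        apply hz
        have := i.isLt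
        omega
    symm
    calc U eps x = ∑ i : Fin N, ∑ n ∈ a.support, ∑ k ∈ b.support,
          eps (i.val+1) * (if n - k = (i.val:ℤ)+1 then
            a n * b k * Complex.exp (2 * Real.pi * Complex.I * ((n : ℂ) + (k : ℂ)) * (x:ℂ))
            else 0) := by
          rw [hU]
          refine Finset.sum_congr rfl (fun i _ => ?_)
          unfold SnOp
          rw [Finset.mul_sum]
          refine Finset.sum_congr rfl (fun n _ => ?_)
          rw [Finset.mul_sum]
      _ = ∑ n ∈ a.support, ∑ k ∈ b.support, ∑ i : Fin N,
          eps (i.val+1) * (if n - k = (i.val:ℤ)+1 then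
            a n * b k * Complex.exp (2 * Real.pi * Complex.I * ((n : ℂ) + (k : ℂ)) * (x:ℂ))
            else 0) := by
          rw [Finset.sum_comm]
          exact Finset.sum_congr rfl (fun n _ => Finset.sum_comm)
      _ = _ := by
          refine Finset.sum_congr rfl (fun n _ => Finset.sum_congr rfl (fun k _ => ?_))
          rw [key (n-k) (a n * b k * Complex.exp (2 * Real.pi * Complex.I * ((n : ℂ) + (k : ℂ)) * (x:ℂ)))]
          ring
  have hUbound : ∀ eps : ℕ → ℂ, (∀ n, eps n = 0 ∨ eps n = 1) →
      eLpNorm (U eps) r torusMeasure ≤ ENNReal.ofReal C * Pa * Qb := by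
    intro eps heps
    have hthis := hmul N eps heps a b
    have hfun : (fun x : ℝ => ∑ n ∈ a.support, ∑ k ∈ b.support,
        a n * b k * (if 1 ≤ n - k ∧ n - k ≤ (N:ℤ) then eps (n-k).toNat else 0) *
          Complex.exp (2 * Real.pi * Complex.I * ((n : ℂ) + (k : ℂ)) * (x:ℂ))) = U eps :=
      funext (hrepr eps)
    rwa [hfun] at hthis
  set B := ENNReal.ofReal C * Pa * Qb with hB
  have hFbound : ∀ ε : Fin N → Bool,
      eLpNorm (F ε) r torusMeasure ≤ 3 * B := by
    intro ε
    set epsb : ℕ → ℂ := fun n =>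
      if hn : 1 ≤ n ∧ n ≤ N then (if ε ⟨n-1, by omega⟩ then 1 else 0) else 0 with hepsb
    have hepsb01 : ∀ n, epsb n = 0 ∨ epsb n = 1 := by
      intro n
      simp only [hepsb]
      split_ifs <;> simp
    have hFdecomp : F ε = (fun x => 2 * U epsb x) - U (fun _ => 1) := by
      funext x
      simp only [Pi.sub_apply]
      rw [hF, hU]
      simp only []
      rw [Finset.mul_sum, ← Finset.sum_sub_distrib]
      refine Finset.sum_congr rfl (fun i _ => ?_)
      have hcond : 1 ≤ i.val+1 ∧ i.val+1 ≤ N := ⟨Nat.le_add_left _ _, i.isLt⟩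
      have h1 : epsb (i.val + 1) = if ε i then 1 else 0 := by
        simp only [hepsb]
        rw [dif_pos hcond]
        have hfin : (⟨(i : ℕ) + 1 - 1, by omega⟩ : Fin N) = i := by
          apply Fin.ext
          simp
        rw [hfin]
      rw [h1]
      unfold Khin.sg
      split_ifs <;> ring
    rw [hFdecomp]
    have h2U : eLpNorm (fun x => 2 * U epsb x) r torusMeasure
        = 2 * eLpNorm (U epsb) r torusMeasure := by
      have heq : (fun x : ℝ => (2:ℂ) * U epsb x) = (2:ℂ) • (U epsb) := by
        funext x
        simp [Pi.smul_apply, smul_eq_mul]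
      rw [heq, eLpNorm_const_smul]
      congr 1
      rw [← ofReal_norm_eq_enorm]
      simp
    calc eLpNorm ((fun x => 2 * U epsb x) - U (fun _ => 1)) r torusMeasure
        ≤ eLpNorm (fun x => 2 * U epsb x) r torusMeasure
            + eLpNorm (U (fun _ => 1)) r torusMeasure :=
          by
            refine eLpNorm_sub_le ?_ ?_ hr
            · exact (continuous_const.mul (contU epsb)).aestronglyMeasurable
            · exact (contU (fun _ => 1)).aestronglyMeasurable
      _ ≤ 2 * B + B := by
          rw [h2U, hB]
          exact add_le_add (mul_le_mul_right (hUbound epsb hepsb01) 2)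
            (hUbound (fun _ => 1) (fun _ => Or.inr rfl))
      _ = 3 * B := by ring
  have hpoint : ∀ x : ℝ, Real.sqrt (∑' n:ℕ, ‖SnOp a b ((n:ℤ)+1) x‖^2)
      ≤ (Real.sqrt 3 * ((2:ℝ)^N)⁻¹) * ∑ ε : Fin N → Bool, ‖F ε x‖ := by
    intro x
    rw [htsum x]
    have hk := Khin.khintchine (fun i : Fin N => SnOp a b ((i.val:ℤ)+1) x)
    calc Real.sqrt (∑ i : Fin N, ‖SnOp a b ((i.val:ℤ)+1) x‖^2)
        ≤ Real.sqrt 3 * (((2:ℝ)^N)⁻¹ * ∑ ε : Fin N → Bool,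
            ‖Khin.T (fun i : Fin N => SnOp a b ((i.val:ℤ)+1) x) ε‖) := hk
      _ = (Real.sqrt 3 * ((2:ℝ)^N)⁻¹) * ∑ ε : Fin N → Bool, ‖F ε x‖ := by
          rw [mul_assoc]
          rfl
  set cst : ℝ := Real.sqrt 3 * ((2:ℝ)^N)⁻¹ with hcst
  have hcst0 : 0 ≤ cst := by positivity
  calc eLpNorm (fun x : ℝ => Real.sqrt (∑' n : ℕ, ‖SnOp a b ((n : ℤ) + 1) x‖ ^ 2))
        r torusMeasure
      ≤ eLpNorm (cst • (fun x : ℝ => ∑ ε : Fin N → Bool, ‖F ε x‖)) r torusMeasure := by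
        refine eLpNorm_mono (fun x => ?_)
        rw [Real.norm_eq_abs, _root_.abs_of_nonneg (Real.sqrt_nonneg _)]
        refine (hpoint x).trans ?_
        have hx : (cst • (fun x : ℝ => ∑ ε : Fin N → Bool, ‖F ε x‖)) x
            = cst * ∑ ε : Fin N → Bool, ‖F ε x‖ := rfl
        rw [hx]
        exact le_abs_self _
    _ = (‖cst‖₊ : ℝ≥0∞) * eLpNorm (fun x : ℝ => ∑ ε : Fin N → Bool, ‖F ε x‖) r torusMeasure :=
        eLpNorm_const_smul cst _ r torusMeasure
    _ ≤ (‖cst‖₊ : ℝ≥0∞) * ∑ ε : Fin N → Bool, eLpNorm (F ε) r torusMeasure := by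
        refine mul_le_mul_right ?_ _
        have heq : (fun x : ℝ => ∑ ε : Fin N → Bool, ‖F ε x‖)
            = ∑ ε : Fin N → Bool, (fun x : ℝ => ‖F ε x‖) := by
          funext x
          rw [Finset.sum_apply]
        rw [heq]
        refine (eLpNorm_sum_le (fun ε _ => ((contF ε).norm).aestronglyMeasurable) hr).trans ?_
        refine Finset.sum_le_sum (fun ε _ => ?_)
        rw [eLpNorm_norm]
    _ ≤ (‖cst‖₊ : ℝ≥0∞) * ((2^N : ℝ≥0∞) * (3 * B)) := by
        refine mul_le_mul_right ?_ _
        refine (Finset.sum_le_card_nsmul Finset.univ _ (3*B) (fun ε _ => hFbound ε)).trans ?_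
        rw [Finset.card_univ, Fintype.card_fun]
        simp [nsmul_eq_mul]
    _ ≤ ENNReal.ofReal (3 * Real.sqrt 3 * C) * Pa * Qb := by
        have hnn : (‖cst‖₊ : ℝ≥0∞) = ENNReal.ofReal cst := by
          rw [← Real.enorm_eq_ofReal hcst0]
          rfl
        rw [hnn, hB]
        have h1 : ENNReal.ofReal cst * ((2^N : ℝ≥0∞) * (3 * (ENNReal.ofReal C * Pa * Qb)))
            = (ENNReal.ofReal cst * (2^N : ℝ≥0∞) * 3 * ENNReal.ofReal C) * (Pa * Qb) := by
          ring
        rw [h1]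
        have h2N : ((2:ℝ≥0∞)^N) = ENNReal.ofReal ((2:ℝ)^N) := by
          rw [ENNReal.ofReal_pow (by norm_num)]
          norm_num
        have h3 : (3 : ℝ≥0∞) = ENNReal.ofReal 3 := by norm_num
        have h2 : ENNReal.ofReal cst * (2^N : ℝ≥0∞) * 3 * ENNReal.ofReal C
            = ENNReal.ofReal (3 * Real.sqrt 3 * C) := by
          rw [h2N, h3, ← ENNReal.ofReal_mul hcst0,
            ← ENNReal.ofReal_mul (by positivity), ← ENNReal.ofReal_mul (by positivity)]
          congr 1
          rw [hcst]
          have h2s : (Real.sqrt 3 * ((2:ℝ)^N)⁻¹) * ((2:ℝ)^N) = Real.sqrt 3 := by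
            have h2ne : ((2:ℝ)^N) ≠ 0 := by positivity
            field_simp
          linear_combination (3*C) * h2s
        rw [h2, ← mul_assoc]
end

section
/- Let p, q ∈ [1,∞) and r ∈ [1,∞) satisfy 1/p + 1/q = 1/r. If there exists a constant C > 0 such that for all trigonometric polynomials P, Q on 𝕋, ‖(Σ_{n∈ℤ} |S_n(P,Q)|²)^{1/2}‖_{L^r(𝕋)} ≤ C ‖P‖_{L^p(𝕋)} ‖Q‖_{L^q(𝕋)}, where S_n(P,Q)(x) = Σ_{k,l∈ℤ, k−l=n} P̂(k) Q̂(l) e^{2πi(k+l)x}, then necessarily p ≥ 2 and q ≥ 2. -/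
open MeasureTheory Complex
open scoped ENNReal

noncomputable def E (n : ℤ) (x : ℝ) : ℂ :=
  Complex.exp (2 * Real.pi * Complex.I * (n : ℂ) * (x : ℂ))

lemma torus_univ : torusMeasure Set.univ = 1 := by
  simp [torusMeasure, Measure.restrict_apply, Real.volume_Ico]

lemma torus_ne_zero : torusMeasure ≠ 0 := by
  intro h
  have := torus_univ
  rw [h] at this
  simp at this

instance : IsProbabilityMeasure torusMeasure := ⟨torus_univ⟩

lemma E_cont (n : ℤ) : Continuous (E n) :=
  Complex.continuous_exp.comp (by continuity)

lemma norm_E (n : ℤ) (x : ℝ) : ‖E n x‖ = 1 := by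
  rw [E, Complex.norm_exp]
  norm_num [Complex.mul_re, Complex.mul_im]

lemma E_mul (m n : ℤ) (x : ℝ) : E m x * E n x = E (m + n) x := by
  rw [E, E, E, ← Complex.exp_add]
  push_cast
  ring_nf

lemma E_conj (n : ℤ) (x : ℝ) : (starRingEnd ℂ) (E n x) = E (-n) x := by
  rw [E, E, ← Complex.exp_conj]
  congr 1
  simp only [map_mul, Complex.conj_I, Complex.conj_ofReal, map_ofNat, map_intCast,
    Complex.ofReal_intCast]
  push_cast
  ring

lemma integral_E (n : ℤ) :
    ∫ x : ℝ, E n x ∂torusMeasure = if n = 0 then 1 else 0 := by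
  have h1 : (∫ x : ℝ, E n x ∂torusMeasure) = ∫ x in (0:ℝ)..1, E n x := by
    rw [torusMeasure, intervalIntegral.integral_of_le (by norm_num : (0:ℝ) ≤ 1)]
    rw [show (volume.restrict (Set.Ico (0:ℝ) 1) : Measure ℝ) = volume.restrict (Set.Ico (0:ℝ) 1) from rfl]
    rw [integral_Ico_eq_integral_Ioo, integral_Ioc_eq_integral_Ioo]
  rw [h1]
  by_cases hn : n = 0
  · simp [hn, E]
  · have hc : (2 * (Real.pi:ℂ) * Complex.I * (n:ℂ)) ≠ 0 := by
      simp [Complex.ext_iff, Real.pi_ne_zero, Complex.I_ne_zero, hn]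
    rw [show (fun x : ℝ => E n x) = fun x : ℝ => Complex.exp ((2 * (Real.pi:ℂ) * Complex.I * (n:ℂ)) * (x:ℂ)) from rfl]
    rw [integral_exp_mul_complex hc]
    simp only [Complex.ofReal_one, mul_one, Complex.ofReal_zero, mul_zero, Complex.exp_zero]
    rw [show (2 * (Real.pi:ℂ) * Complex.I * (n:ℂ)) = (n:ℂ) * (2 * Real.pi * Complex.I) by ring]
    rw [Complex.exp_int_mul_two_pi_mul_I]
    simp [hn]

noncomputable def g (N : ℕ) (x : ℝ) : ℂ := ∑ k ∈ Finset.range N, E k x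

lemma integrable_E (n : ℤ) : Integrable (E n) torusMeasure := by
  rw [torusMeasure]
  exact ((E_cont n).integrableOn_Icc (μ := volume) (a := 0) (b := 1)).mono_set
    Set.Ico_subset_Icc_self

lemma gg_eq (N : ℕ) (x : ℝ) :
    g N x * (starRingEnd ℂ) (g N x)
      = ∑ k ∈ Finset.range N, ∑ l ∈ Finset.range N, E ((k : ℤ) - (l : ℤ)) x := by
  rw [g, map_sum, Finset.sum_mul_sum]
  refine Finset.sum_congr rfl fun k _ => Finset.sum_congr rfl fun l _ => ?_
  rw [E_conj, E_mul, sub_eq_add_neg]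

lemma int_gg (N : ℕ) :
    ∫ x, g N x * (starRingEnd ℂ) (g N x) ∂torusMeasure = (N : ℂ) := by
  simp_rw [gg_eq]
  rw [integral_finset_sum _ fun k _ => integrable_finset_sum _ fun l _ => integrable_E _]
  simp_rw [integral_finset_sum _ fun l _ => integrable_E _, integral_E]
  have : ∀ k ∈ Finset.range N,
      (∑ l ∈ Finset.range N, if (k : ℤ) - (l : ℤ) = 0 then (1 : ℂ) else 0) = 1 := by
    intro k hk
    have : ∀ l : ℕ, ((k : ℤ) - (l : ℤ) = 0) = (l = k) := by
      intro l; simp only [eq_iff_iff]; omega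
    simp_rw [this]
    simp [Finset.mem_range.mp hk]
  rw [Finset.sum_congr rfl this]
  simp

lemma card_fiber (N : ℕ) (n : ℤ) :
    (((Finset.range N) ×ˢ (Finset.range N)).filter
        (fun p : ℕ × ℕ => (p.1 : ℤ) - (p.2 : ℤ) = n)).card = N - n.natAbs := by
  rw [← Finset.card_range (N - n.natAbs)]
  symm
  apply Finset.card_nbij' (i := fun i => (i + n.toNat, i + (-n).toNat))
    (j := fun p => min p.1 p.2)
  · intro i hi
    simp only [Finset.mem_coe, Finset.mem_range] at hi
    simp only [Finset.mem_coe, Finset.mem_filter, Finset.mem_product, Finset.mem_range]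
    refine ⟨⟨?_, ?_⟩, ?_⟩ <;> omega
  · intro p hp
    simp only [Finset.mem_coe, Finset.mem_filter, Finset.mem_product, Finset.mem_range] at hp
    simp only [Finset.mem_coe, Finset.mem_range]
    omega
  · intro i hi
    simp only [Finset.mem_coe, Finset.mem_range] at hi
    simp only []
    omega
  · intro p hp
    simp only [Finset.mem_coe, Finset.mem_filter, Finset.mem_product, Finset.mem_range] at hp
    obtain ⟨⟨h1, h2⟩, h3⟩ := hp
    have : (p.1 : ℤ) - (p.2 : ℤ) = n := h3
    ext <;> simp <;> omega



noncomputable def fej (N : ℕ) : ℤ →₀ ℂ :=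
  Finsupp.onFinset (Finset.Ioo (-(N : ℤ)) N) (fun n => ((N - n.natAbs : ℕ) : ℂ))
    (fun n h => by
      simp only [Finset.mem_Ioo]
      by_contra hc
      apply h
      have : N - n.natAbs = 0 := by omega
      simp [this])

lemma fej_apply (N : ℕ) (n : ℤ) : fej N n = ((N - n.natAbs : ℕ) : ℂ) := rfl

lemma trigPoly_eq_sum_E (a : ℤ →₀ ℂ) (x : ℝ) :
    trigPoly a x = ∑ n ∈ a.support, a n * E n x := rfl

lemma trigPoly_fej (N : ℕ) (x : ℝ) :
    trigPoly (fej N) x = g N x * (starRingEnd ℂ) (g N x) := by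
  rw [gg_eq, trigPoly_eq_sum_E]
  have h1 : ∑ n ∈ (fej N).support, fej N n * E n x
      = ∑ n ∈ Finset.Ioo (-(N : ℤ)) N, fej N n * E n x := by
    refine Finset.sum_subset Finsupp.support_onFinset_subset ?_
    intro n _ hn
    rw [Finsupp.notMem_support_iff.mp hn, zero_mul]
  rw [h1, ← Finset.sum_product']
  have hmap : ∀ p ∈ (Finset.range N) ×ˢ (Finset.range N),
      (p.1 : ℤ) - (p.2 : ℤ) ∈ Finset.Ioo (-(N : ℤ)) N := by
    intro p hp
    simp only [Finset.mem_product, Finset.mem_range] at hp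
    simp only [Finset.mem_Ioo]
    omega
  rw [← Finset.sum_fiberwise_of_maps_to hmap (fun p : ℕ × ℕ => E ((p.1 : ℤ) - (p.2 : ℤ)) x)]
  refine Finset.sum_congr rfl fun n hn => ?_
  have h2 : ∀ p ∈ ((Finset.range N) ×ˢ (Finset.range N)).filter
      (fun p : ℕ × ℕ => (p.1 : ℤ) - (p.2 : ℤ) = n),
      E ((p.1 : ℤ) - (p.2 : ℤ)) x = E n x := by
    intro p hp
    rw [(Finset.mem_filter.mp hp).2]
  rw [Finset.sum_congr rfl h2, Finset.sum_const, card_fiber, fej_apply, nsmul_eq_mul]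

lemma norm_g_le (N : ℕ) (x : ℝ) : ‖g N x‖ ≤ N := by
  calc ‖g N x‖ ≤ ∑ k ∈ Finset.range N, ‖E k x‖ := norm_sum_le _ _
  _ = N := by
    simp only [norm_E]
    simp

lemma trigPoly_fej_real (N : ℕ) (x : ℝ) :
    trigPoly (fej N) x = ((‖g N x‖ ^ 2 : ℝ) : ℂ) := by
  rw [trigPoly_fej, Complex.mul_conj, Complex.normSq_eq_norm_sq]

lemma norm_trigPoly_fej (N : ℕ) (x : ℝ) : ‖trigPoly (fej N) x‖ = ‖g N x‖ ^ 2 := by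
  rw [trigPoly_fej_real, Complex.norm_real, Real.norm_eq_abs, _root_.abs_of_nonneg (by positivity)]

lemma norm_trigPoly_fej_le (N : ℕ) (x : ℝ) : ‖trigPoly (fej N) x‖ ≤ (N : ℝ) ^ 2 := by
  rw [norm_trigPoly_fej]
  exact pow_le_pow_left₀ (norm_nonneg _) (norm_g_le N x) 2

lemma int_norm_trigPoly_fej (N : ℕ) :
    ∫ x, ‖trigPoly (fej N) x‖ ∂torusMeasure = N := by
  have h0 : ∫ x, ((‖g N x‖ ^ 2 : ℝ) : ℂ) ∂torusMeasure = (N : ℂ) := by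
    rw [← int_gg N]
    refine integral_congr_ae (Filter.Eventually.of_forall fun x => ?_)
    exact ((trigPoly_fej_real N x).symm.trans (trigPoly_fej N x) : _)
  have h1 : ((N : ℂ)) = ((∫ x, ‖g N x‖ ^ 2 ∂torusMeasure : ℝ) : ℂ) :=
    h0.symm.trans (integral_ofReal (𝕜 := ℂ))
  have h2 : (∫ x, ‖g N x‖ ^ 2 ∂torusMeasure : ℝ) = N := by exact_mod_cast h1.symm
  rw [← h2]
  refine integral_congr_ae (Filter.Eventually.of_forall fun x => ?_)
  exact norm_trigPoly_fej N x

lemma sum_range_sq (N : ℕ) : (N : ℝ) ^ 3 / 3 ≤ ∑ j ∈ Finset.range N, ((j : ℝ) + 1) ^ 2 := by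
  induction N with
  | zero => simp
  | succ n ih =>
    rw [Finset.sum_range_succ]
    push_cast
    push_cast at ih
    have hn : (0:ℝ) ≤ (n:ℝ) := Nat.cast_nonneg n
    nlinarith [hn, ih]

lemma sum_sq_fej (N : ℕ) :
    (N : ℝ) ^ 3 / 3 ≤ ∑ n ∈ (fej N).support, ‖fej N n‖ ^ 2 := by
  have h1 : ∑ n ∈ (fej N).support, ‖fej N n‖ ^ 2
      = ∑ n ∈ Finset.Ioo (-(N : ℤ)) N, ‖fej N n‖ ^ 2 :=
    Finset.sum_subset Finsupp.support_onFinset_subset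
      (fun n _ hn => by rw [Finsupp.notMem_support_iff.mp hn]; simp)
  have h2 : ((Finset.range N).image (fun m : ℕ => (m : ℤ))) ⊆ Finset.Ioo (-(N : ℤ)) N := by
    intro n hn
    simp only [Finset.mem_image, Finset.mem_range] at hn
    obtain ⟨m, hm, rfl⟩ := hn
    simp only [Finset.mem_Ioo]
    omega
  have h3 := Finset.sum_le_sum_of_subset_of_nonneg h2
    (fun (i : ℤ) _ _ => by positivity : ∀ i ∈ Finset.Ioo (-(N : ℤ)) N,
      i ∉ (Finset.range N).image (fun m : ℕ => (m : ℤ)) → 0 ≤ ‖fej N i‖ ^ 2)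
  have h4 : ∑ n ∈ (Finset.range N).image (fun m : ℕ => (m : ℤ)), ‖fej N n‖ ^ 2
      = ∑ m ∈ Finset.range N, ‖fej N (m : ℤ)‖ ^ 2 :=
    Finset.sum_image (fun a _ b _ hab => by exact_mod_cast hab)
  have h5 : ∑ m ∈ Finset.range N, ‖fej N (m : ℤ)‖ ^ 2
      = ∑ m ∈ Finset.range N, ((N - m : ℕ) : ℝ) ^ 2 := by
    refine Finset.sum_congr rfl fun m _ => ?_
    rw [fej_apply]
    simp
  have h6 : ∑ m ∈ Finset.range N, ((N - m : ℕ) : ℝ) ^ 2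
      = ∑ j ∈ Finset.range N, ((j : ℝ) + 1) ^ 2 := by
    rw [← Finset.sum_range_reflect (fun m => ((N - m : ℕ) : ℝ) ^ 2) N]
    refine Finset.sum_congr rfl fun j hj => ?_
    have hj' := Finset.mem_range.mp hj
    have hN : N - (N - 1 - j) = j + 1 := by omega
    rw [hN]
    push_cast
    ring
  calc (N : ℝ) ^ 3 / 3 ≤ ∑ j ∈ Finset.range N, ((j : ℝ) + 1) ^ 2 := sum_range_sq N
  _ = ∑ n ∈ (Finset.range N).image (fun m : ℕ => (m : ℤ)), ‖fej N n‖ ^ 2 := by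
    rw [h4, h5, h6]
  _ ≤ ∑ n ∈ Finset.Ioo (-(N : ℤ)) N, ‖fej N n‖ ^ 2 := h3
  _ = ∑ n ∈ (fej N).support, ‖fej N n‖ ^ 2 := h1.symm

lemma integrable_trigPoly (a : ℤ →₀ ℂ) : Integrable (trigPoly a) torusMeasure := by
  have : trigPoly a = fun x => ∑ n ∈ a.support, a n * E n x := rfl
  rw [this]
  exact integrable_finset_sum _ fun n _ => (integrable_E n).const_mul _

lemma lintegral_norm_fej (N : ℕ) :
    ∫⁻ x, (‖trigPoly (fej N) x‖₊ : ℝ≥0∞) ∂torusMeasure = ENNReal.ofReal N := by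
  have := ofReal_integral_norm_eq_lintegral_enorm (integrable_trigPoly (fej N))
  rw [int_norm_trigPoly_fej] at this
  exact this.symm

lemma eLpNorm_fej_le (N : ℕ) (s : ℝ≥0∞) (hs1 : 1 ≤ s) (hstop : s ≠ ⊤) :
    eLpNorm (trigPoly (fej N)) s torusMeasure ≤
      (ENNReal.ofReal ((N : ℝ) ^ 2) ^ (s.toReal - 1) * ENNReal.ofReal (N : ℝ))
        ^ (1 / s.toReal) := by
  have hs0 : s ≠ 0 := by
    intro h; rw [h] at hs1; simp at hs1
  have hst1 : 1 ≤ s.toReal := by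
    have := ENNReal.toReal_mono hstop hs1
    simpa using this
  rw [eLpNorm_eq_lintegral_rpow_enorm_toReal hs0 hstop]
  refine ENNReal.rpow_le_rpow ?_ (by positivity)
  have hpt : ∀ x : ℝ, (‖trigPoly (fej N) x‖₊ : ℝ≥0∞) ^ s.toReal ≤
      ENNReal.ofReal ((N : ℝ) ^ 2) ^ (s.toReal - 1) * (‖trigPoly (fej N) x‖₊ : ℝ≥0∞) := by
    intro x
    have hb : (‖trigPoly (fej N) x‖₊ : ℝ≥0∞) ≤ ENNReal.ofReal ((N : ℝ) ^ 2) := by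
      rw [← enorm_eq_nnnorm, ← ofReal_norm_eq_enorm]
      exact ENNReal.ofReal_le_ofReal (norm_trigPoly_fej_le N x)
    calc (‖trigPoly (fej N) x‖₊ : ℝ≥0∞) ^ s.toReal
        = (‖trigPoly (fej N) x‖₊ : ℝ≥0∞) ^ (s.toReal - 1) *
            (‖trigPoly (fej N) x‖₊ : ℝ≥0∞) ^ (1 : ℝ) := by
          rw [← ENNReal.rpow_add_of_nonneg _ _ (by linarith) zero_le_one]
          norm_num
    _ ≤ ENNReal.ofReal ((N : ℝ) ^ 2) ^ (s.toReal - 1) * (‖trigPoly (fej N) x‖₊ : ℝ≥0∞) := by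
          rw [ENNReal.rpow_one]
          exact mul_le_mul_left (ENNReal.rpow_le_rpow hb (by linarith)) _
  calc ∫⁻ x, (‖trigPoly (fej N) x‖₊ : ℝ≥0∞) ^ s.toReal ∂torusMeasure
      ≤ ∫⁻ x, ENNReal.ofReal ((N : ℝ) ^ 2) ^ (s.toReal - 1) *
          (‖trigPoly (fej N) x‖₊ : ℝ≥0∞) ∂torusMeasure := lintegral_mono hpt
  _ = ENNReal.ofReal ((N : ℝ) ^ 2) ^ (s.toReal - 1) *
        ∫⁻ x, (‖trigPoly (fej N) x‖₊ : ℝ≥0∞) ∂torusMeasure :=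
      lintegral_const_mul' _ _ (by
        exact ENNReal.rpow_ne_top_of_nonneg (by linarith) ENNReal.ofReal_ne_top)
  _ = ENNReal.ofReal ((N : ℝ) ^ 2) ^ (s.toReal - 1) * ENNReal.ofReal (N : ℝ) := by
      rw [lintegral_norm_fej]

lemma key (s : ℝ≥0∞) (hs1 : 1 ≤ s) (hstop : s ≠ ⊤) (C : ℝ) (hC : 0 < C)
    (hb : ∀ N : ℕ, ENNReal.ofReal (Real.sqrt ((N : ℝ) ^ 3 / 3)) ≤
      ENNReal.ofReal C * eLpNorm (trigPoly (fej N)) s torusMeasure) :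
    2 ≤ s := by
  by_contra hlt
  push_neg at hlt
  have hst1 : 1 ≤ s.toReal := by simpa using ENNReal.toReal_mono hstop hs1
  have hst2 : s.toReal < 2 := by
    have := (ENNReal.toReal_lt_toReal hstop (by norm_num : (2 : ℝ≥0∞) ≠ ⊤)).mpr hlt
    simpa using this
  have hstpos : 0 < s.toReal := by linarith
  set st := s.toReal with hstdef
  set ε : ℝ := 1 / st - 1 / 2 with hεdef
  have hεpos : 0 < ε := by
    have h1 : 1 / 2 < 1 / st := by
      apply one_div_lt_one_div_of_lt hstpos hst2
    simp only [hεdef]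
    linarith
  obtain ⟨N, hN⟩ := exists_nat_gt (max 1 ((2 * C) ^ (1 / ε)))
  have hN1 : (1 : ℝ) < N := lt_of_le_of_lt (le_max_left _ _) hN
  have hNpos : (0 : ℝ) < N := by linarith
  have hNC : (2 * C) ^ (1 / ε) < (N : ℝ) := lt_of_le_of_lt (le_max_right _ _) hN
  -- combine hypothesis with the eLpNorm bound
  have h2 : ENNReal.ofReal (Real.sqrt ((N : ℝ) ^ 3 / 3)) ≤
      ENNReal.ofReal (C * (((N : ℝ) ^ 2) ^ (st - 1) * (N : ℝ)) ^ (1 / st)) := by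
    refine le_trans (hb N) ?_
    have h3 := eLpNorm_fej_le N s hs1 hstop
    calc ENNReal.ofReal C * eLpNorm (trigPoly (fej N)) s torusMeasure
        ≤ ENNReal.ofReal C *
          ((ENNReal.ofReal ((N : ℝ) ^ 2) ^ (st - 1) * ENNReal.ofReal (N : ℝ)) ^ (1 / st)) :=
          mul_le_mul_right h3 _
    _ = ENNReal.ofReal (C * (((N : ℝ) ^ 2) ^ (st - 1) * (N : ℝ)) ^ (1 / st)) := by
        rw [ENNReal.ofReal_rpow_of_nonneg (by positivity) (by linarith),
          ← ENNReal.ofReal_mul (by positivity),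
          ENNReal.ofReal_rpow_of_nonneg (by positivity) (by positivity),
          ← ENNReal.ofReal_mul (le_of_lt hC)]
  have h4 : Real.sqrt ((N : ℝ) ^ 3 / 3) ≤ C * (((N : ℝ) ^ 2) ^ (st - 1) * (N : ℝ)) ^ (1 / st) :=
    (ENNReal.ofReal_le_ofReal_iff (by positivity)).mp h2
  -- simplify the right-hand side to a power of N
  have h5 : (((N : ℝ) ^ 2) ^ (st - 1) * (N : ℝ)) ^ (1 / st) = (N : ℝ) ^ (2 - 1 / st) := by
    rw [← Real.rpow_natCast (N : ℝ) 2, ← Real.rpow_mul (le_of_lt hNpos)]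
    nth_rewrite 2 [← Real.rpow_one (N : ℝ)]
    rw [← Real.rpow_add hNpos, ← Real.rpow_mul (le_of_lt hNpos)]
    congr 1
    push_cast
    field_simp
    ring
  -- lower bound the left-hand side
  have hsqrt3 : Real.sqrt 3 ≤ 2 := by
    have h40 : Real.sqrt 4 = 2 := by
      rw [show (4 : ℝ) = 2 ^ 2 by norm_num, Real.sqrt_sq (by norm_num : (0:ℝ) ≤ 2)]
    calc Real.sqrt 3 ≤ Real.sqrt 4 := Real.sqrt_le_sqrt (by norm_num)
    _ = 2 := h40
  have h6 : (N : ℝ) ^ ((3 : ℝ) / 2) / 2 ≤ Real.sqrt ((N : ℝ) ^ 3 / 3) := by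
    have hs3 : Real.sqrt ((N : ℝ) ^ 3 / 3) = Real.sqrt ((N : ℝ) ^ 3) / Real.sqrt 3 :=
      Real.sqrt_div (by positivity) 3
    have hs4 : Real.sqrt ((N : ℝ) ^ 3) = (N : ℝ) ^ ((3 : ℝ) / 2) := by
      rw [show ((N : ℝ) ^ 3) = (N : ℝ) ^ (3 : ℝ) by
          rw [← Real.rpow_natCast (N : ℝ) 3]; norm_num,
        Real.sqrt_eq_rpow, ← Real.rpow_mul (le_of_lt hNpos)]
      norm_num
    rw [hs3, hs4]
    exact div_le_div_of_nonneg_left (by positivity) (Real.sqrt_pos.mpr (by norm_num)) hsqrt3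
  -- combine
  have h7 : (N : ℝ) ^ ((3 : ℝ) / 2) ≤ 2 * C * (N : ℝ) ^ (2 - 1 / st) := by
    rw [h5] at h4
    nlinarith [h6.trans h4]
  have h8 : (N : ℝ) ^ ((3 : ℝ) / 2) = (N : ℝ) ^ (2 - 1 / st) * (N : ℝ) ^ ε := by
    rw [← Real.rpow_add hNpos]
    congr 1
    simp only [hεdef]
    ring
  have h9 : (N : ℝ) ^ ε ≤ 2 * C := by
    have hpow : (0 : ℝ) < (N : ℝ) ^ (2 - 1 / st) := Real.rpow_pos_of_pos hNpos _
    rw [h8] at h7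
    calc (N : ℝ) ^ ε = ((N : ℝ) ^ (2 - 1 / st) * (N : ℝ) ^ ε) / (N : ℝ) ^ (2 - 1 / st) := by
          field_simp
    _ ≤ (2 * C * (N : ℝ) ^ (2 - 1 / st)) / (N : ℝ) ^ (2 - 1 / st) := by
          gcongr
    _ = 2 * C := by field_simp
  have h10 : 2 * C < (N : ℝ) ^ ε := by
    have h2C : (0 : ℝ) < 2 * C := by linarith
    calc 2 * C = ((2 * C) ^ (1 / ε)) ^ ε := by
          rw [← Real.rpow_mul (le_of_lt h2C), one_div_mul_cancel (ne_of_gt hεpos),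
            Real.rpow_one]
    _ < (N : ℝ) ^ ε := Real.rpow_lt_rpow (by positivity) hNC hεpos
  linarith



lemma sf_left (a : ℤ →₀ ℂ) (x : ℝ) :
    (∑' n : ℤ, ‖SnOp a (Finsupp.single 0 1) n x‖ ^ 2)
      = ∑ n ∈ a.support, ‖a n‖ ^ 2 := by
  have hval : ∀ n : ℤ, SnOp a (Finsupp.single 0 1) n x
      = if n ∈ a.support then a n * E n x else 0 := by
    intro n
    show (∑ k ∈ a.support, ∑ l ∈ (Finsupp.single (0:ℤ) (1:ℂ)).support, _) = _
    rw [Finsupp.support_single_ne_zero 0 one_ne_zero]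
    simp only [Finset.sum_singleton, Finsupp.single_eq_same, mul_one, sub_zero,
      Int.cast_zero, add_zero]
    rw [Finset.sum_ite_eq' a.support n]
    rfl
  have hterm : ∀ n : ℤ, ‖SnOp a (Finsupp.single 0 1) n x‖ ^ 2
      = if n ∈ a.support then ‖a n‖ ^ 2 else 0 := by
    intro n
    rw [hval n]
    by_cases hn : n ∈ a.support
    · rw [if_pos hn, if_pos hn, norm_mul, norm_E, mul_one]
    · rw [if_neg hn, if_neg hn, norm_zero]
      norm_num
  calc (∑' n : ℤ, ‖SnOp a (Finsupp.single 0 1) n x‖ ^ 2)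
      = ∑ n ∈ a.support, ‖SnOp a (Finsupp.single 0 1) n x‖ ^ 2 := by
        refine tsum_eq_sum fun n hn => ?_
        rw [hterm n, if_neg hn]
  _ = ∑ n ∈ a.support, ‖a n‖ ^ 2 := by
        refine Finset.sum_congr rfl fun n hn => ?_
        rw [hterm n, if_pos hn]

lemma sf_right (b : ℤ →₀ ℂ) (x : ℝ) :
    (∑' n : ℤ, ‖SnOp (Finsupp.single 0 1) b n x‖ ^ 2)
      = ∑ n ∈ b.support, ‖b n‖ ^ 2 := by
  have hval : ∀ n : ℤ, SnOp (Finsupp.single 0 1) b n x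
      = if -n ∈ b.support then b (-n) * E (-n) x else 0 := by
    intro n
    show (∑ k ∈ (Finsupp.single (0:ℤ) (1:ℂ)).support, ∑ l ∈ b.support, _) = _
    rw [Finsupp.support_single_ne_zero 0 one_ne_zero]
    simp only [Finset.sum_singleton, Finsupp.single_eq_same, one_mul, zero_sub,
      Int.cast_zero, zero_add]
    have hcond : ∀ l : ℤ, (-l = n) = (l = -n) := fun l => by
      simp only [eq_iff_iff]; omega
    simp_rw [hcond]
    rw [Finset.sum_ite_eq' b.support (-n)]
    by_cases hn : -n ∈ b.support
    · rw [if_pos hn, if_pos hn, E]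
      try push_cast
      try ring_nf
    · rw [if_neg hn, if_neg hn]
  have hterm : ∀ n : ℤ, ‖SnOp (Finsupp.single 0 1) b n x‖ ^ 2
      = if -n ∈ b.support then ‖b (-n)‖ ^ 2 else 0 := by
    intro n
    rw [hval n]
    by_cases hn : -n ∈ b.support
    · rw [if_pos hn, if_pos hn, norm_mul, norm_E, mul_one]
    · rw [if_neg hn, if_neg hn, norm_zero]
      norm_num
  have hre : (∑' n : ℤ, ‖SnOp (Finsupp.single 0 1) b n x‖ ^ 2)
      = ∑' n : ℤ, ‖SnOp (Finsupp.single 0 1) b (-n) x‖ ^ 2 :=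
    ((Equiv.neg ℤ).tsum_eq fun n => ‖SnOp (Finsupp.single 0 1) b n x‖ ^ 2).symm
  rw [hre]
  calc (∑' n : ℤ, ‖SnOp (Finsupp.single 0 1) b (-n) x‖ ^ 2)
      = ∑ n ∈ b.support, ‖SnOp (Finsupp.single 0 1) b (-n) x‖ ^ 2 := by
        refine tsum_eq_sum fun n hn => ?_
        rw [hterm (-n), neg_neg, if_neg hn]
  _ = ∑ n ∈ b.support, ‖b n‖ ^ 2 := by
        refine Finset.sum_congr rfl fun n hn => ?_
        rw [hterm (-n), neg_neg, if_pos hn]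

lemma eLpNorm_const_torus (c : ℝ) (hc : 0 ≤ c) (s : ℝ≥0∞) (hs : s ≠ 0) :
    eLpNorm (fun _ : ℝ => c) s torusMeasure = ENNReal.ofReal c := by
  rw [eLpNorm_const c hs torus_ne_zero, torus_univ]
  simp [← ofReal_norm_eq_enorm, Real.norm_eq_abs, _root_.abs_of_nonneg hc]

lemma trigPoly_single_one : trigPoly (Finsupp.single 0 (1 : ℂ)) = fun _ => 1 := by
  funext x
  rw [trigPoly, Finsupp.support_single_ne_zero 0 one_ne_zero]
  rw [Finset.sum_singleton, Finsupp.single_eq_same]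
  norm_num

lemma eLpNorm_trigPoly_single (s : ℝ≥0∞) (hs : s ≠ 0) :
    eLpNorm (trigPoly (Finsupp.single 0 (1 : ℂ))) s torusMeasure = 1 := by
  rw [trigPoly_single_one, eLpNorm_const _ hs torus_ne_zero, torus_univ]
  simp


/-- Necessity of $p, q ≥ 2$ for the boundedness of the bilinear Littlewood–Paley
square function on the torus. -/
theorem torus_squareFunction_necessary (p q r : ℝ≥0∞)
    (hp : 1 ≤ p) (hptop : p ≠ ⊤) (hq : 1 ≤ q) (hqtop : q ≠ ⊤)
    (hr : 1 ≤ r) (hrtop : r ≠ ⊤) (hpqr : 1 / p + 1 / q = 1 / r)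
    (h : ∃ C : ℝ, 0 < C ∧ ∀ a b : ℤ →₀ ℂ,
      eLpNorm (fun x : ℝ => Real.sqrt (∑' n : ℤ, ‖SnOp a b n x‖ ^ 2))
          r torusMeasure ≤
        ENNReal.ofReal C * eLpNorm (trigPoly a) p torusMeasure *
          eLpNorm (trigPoly b) q torusMeasure) :
    2 ≤ p ∧ 2 ≤ q := by
  obtain ⟨C, hC, hall⟩ := h
  have hr0 : r ≠ 0 := by intro h0; rw [h0] at hr; simp at hr
  have hp0 : p ≠ 0 := by intro h0; rw [h0] at hp; simp at hp
  have hq0 : q ≠ 0 := by intro h0; rw [h0] at hq; simp at hq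
  constructor
  · refine key p hp hptop C hC fun N => ?_
    have hmain := hall (fej N) (Finsupp.single 0 1)
    have hfn : (fun x : ℝ => Real.sqrt (∑' n : ℤ, ‖SnOp (fej N) (Finsupp.single 0 1) n x‖ ^ 2))
        = fun _ : ℝ => Real.sqrt (∑ n ∈ (fej N).support, ‖fej N n‖ ^ 2) :=
      funext fun x => by rw [sf_left]
    rw [hfn, eLpNorm_const_torus _ (Real.sqrt_nonneg _) r hr0,
      eLpNorm_trigPoly_single q hq0, mul_one] at hmain
    refine le_trans ?_ hmain
    exact ENNReal.ofReal_le_ofReal (Real.sqrt_le_sqrt (sum_sq_fej N))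
  · refine key q hq hqtop C hC fun N => ?_
    have hmain := hall (Finsupp.single 0 1) (fej N)
    have hfn : (fun x : ℝ => Real.sqrt (∑' n : ℤ, ‖SnOp (Finsupp.single 0 1) (fej N) n x‖ ^ 2))
        = fun _ : ℝ => Real.sqrt (∑ n ∈ (fej N).support, ‖fej N n‖ ^ 2) :=
      funext fun x => by rw [sf_right]
    rw [hfn, eLpNorm_const_torus _ (Real.sqrt_nonneg _) r hr0,
      eLpNorm_trigPoly_single p hp0, mul_one] at hmain
    refine le_trans ?_ hmain
    exact ENNReal.ofReal_le_ofReal (Real.sqrt_le_sqrt (sum_sq_fej N))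
end
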